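/- For every n ≥ 1 and any two partitions P_1, P_2 of an n-element set S, there exists a partition of S into fewer than 2·√n blocks such that for every block B of this partition, either P_1|_B refines P_2|_B or P_2|_B refines P_1|_B. -/

import Mathlib

open Finset

/-- `P|_B` refines `P'|_B`: every nonempty part `Y ∩ B` of the restriction of `P` to `B` is
contained in some part `Z ∩ B` of the restriction of `P'` to `B`. -/
def RestrRefines {α : Type*} [Fintype α] [DecidableEq α]
    (P P' : Finpartition (Finset.univ : Finset α)) (B : Finset α) : Prop :=
  ∀ Y ∈ P.parts, (Y ∩ B).Nonempty → ∃ Z ∈ P'.parts, Y ∩ B ⊆ Z ∩ B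

/-- Any two partitions of an `n`-element set admit a common partition into fewer than
`2·√n` blocks on each of which one of the two restricted partitions refines the other. -/
theorem two_partitions_base_sets (α : Type*) [Fintype α] [DecidableEq α] (n : ℕ)
    (hn : 1 ≤ n) (hcard : Fintype.card α = n)
    (P₁ P₂ : Finpartition (Finset.univ : Finset α)) :
    ∃ Q : Finpartition (Finset.univ : Finset α),
      (Q.parts.card : ℝ) < 2 * Real.sqrt n ∧
      ∀ B ∈ Q.parts, RestrRefines P₁ P₂ B ∨ RestrRefines P₂ P₁ B := by
  classical
  letI : LinearOrder α := LinearOrder.lift' (Fintype.equivFin α) (Fintype.equivFin α).injective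
  set s : ℕ := Nat.sqrt n + 1 with hs
  -- index function
  set ind : α → Finset α ⊕ ℕ := fun x =>
    if s ≤ (P₁.part x).card then Sum.inl (P₁.part x)
    else Sum.inr ((P₁.part x).filter (· < x)).card with hind
  haveI : DecidableRel (Setoid.ker ind).r := fun a b => decEq (ind a) (ind b)
  set Q := Finpartition.ofSetoid (Setoid.ker ind) with hQ
  -- membership in parts of Q
  have hmem : ∀ B ∈ Q.parts, ∀ x ∈ B, ∀ y, (y ∈ B ↔ ind x = ind y) := by
    intro B hB x hx y
    have hpart : Q.part x = B := Q.part_eq_of_mem hB hx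
    rw [← hpart, hQ, Finpartition.mem_part_ofSetoid_iff_rel]
    exact Setoid.ker_def
  -- strict monotonicity of rank within a part
  have hkey : ∀ (Y : Finset α), ∀ x ∈ Y, ∀ y ∈ Y, x < y →
      (Y.filter (· < x)).card < (Y.filter (· < y)).card := by
    intro Y x hx y hy hlt
    apply Finset.card_lt_card
    constructor
    · intro z hz
      rw [Finset.mem_filter] at hz ⊢
      exact ⟨hz.1, lt_trans hz.2 hlt⟩
    · intro hsub
      have hxmem : x ∈ Y.filter (· < x) := hsub (Finset.mem_filter.2 ⟨hx, hlt⟩)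
      exact absurd (Finset.mem_filter.1 hxmem).2 (lt_irrefl x)
  -- rank injectivity within a part
  have hrank : ∀ Y : Finset α, ∀ x ∈ Y, ∀ y ∈ Y,
      (Y.filter (· < x)).card = (Y.filter (· < y)).card → x = y := by
    intro Y x hx y hy hcardeq
    rcases lt_trichotomy x y with h | h | h
    · exact absurd hcardeq (Nat.ne_of_lt (hkey Y x hx y hy h))
    · exact h
    · exact absurd hcardeq.symm (Nat.ne_of_lt (hkey Y y hy x hx h))
  refine ⟨Q, ?_, ?_⟩
  · -- cardinality bound
    set bigs := P₁.parts.filter (fun Y => s ≤ Y.card) with hbigs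
    -- Q.parts ⊆ image of (image of ind)
    have hsub : Q.parts ⊆ ((Finset.univ : Finset α).image ind).image
        (fun v => Finset.univ.filter (fun b => ind b = v)) := by
      intro B hB
      obtain ⟨x, hx⟩ := Q.nonempty_of_mem_parts hB
      refine Finset.mem_image.2 ⟨ind x, Finset.mem_image.2 ⟨x, Finset.mem_univ x, rfl⟩, ?_⟩
      ext y
      simp only [Finset.mem_filter]
      constructor
      · rintro ⟨-, h⟩
        exact (hmem B hB x hx y).2 h.symm
      · intro hy
        exact ⟨Finset.mem_univ y, ((hmem B hB x hx y).1 hy).symm⟩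
    have hindrange : (Finset.univ : Finset α).image ind ⊆
        bigs.image Sum.inl ∪ (Finset.range (Nat.sqrt n)).image Sum.inr := by
      intro v hv
      obtain ⟨x, -, rfl⟩ := Finset.mem_image.1 hv
      by_cases hbig : s ≤ (P₁.part x).card
      · refine Finset.mem_union_left _ (Finset.mem_image.2 ⟨P₁.part x, ?_, ?_⟩)
        · exact Finset.mem_filter.2 ⟨P₁.part_mem.2 (Finset.mem_univ x), hbig⟩
        · simp [hind, hbig]
      · refine Finset.mem_union_right _ (Finset.mem_image.2
          ⟨((P₁.part x).filter (· < x)).card, ?_, ?_⟩)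
        · have hxmem : x ∈ P₁.part x := P₁.mem_part (Finset.mem_univ x)
          have hlt : ((P₁.part x).filter (· < x)).card < (P₁.part x).card := by
            refine Finset.card_lt_card ⟨Finset.filter_subset _ _, fun hsub => ?_⟩
            exact absurd (Finset.mem_filter.1 (hsub hxmem)).2 (lt_irrefl x)
          have : (P₁.part x).card ≤ Nat.sqrt n := by omega
          exact Finset.mem_range.2 (lt_of_lt_of_le hlt this)
        · simp [hind, hbig]
    have hcount : Q.parts.card ≤ bigs.card + Nat.sqrt n := by
      calc Q.parts.card ≤ (((Finset.univ : Finset α).image ind).image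
              (fun v => Finset.univ.filter (fun b => ind b = v))).card :=
            Finset.card_le_card hsub
        _ ≤ ((Finset.univ : Finset α).image ind).card := Finset.card_image_le
        _ ≤ (bigs.image Sum.inl ∪ (Finset.range (Nat.sqrt n)).image Sum.inr).card :=
            Finset.card_le_card hindrange
        _ ≤ (bigs.image Sum.inl).card + ((Finset.range (Nat.sqrt n)).image Sum.inr).card :=
            Finset.card_union_le _ _
        _ ≤ bigs.card + Nat.sqrt n := by
            refine Nat.add_le_add (Finset.card_image_le) ?_
            exact Finset.card_image_le.trans (by simp)
    -- bigs.card * s ≤ n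
    have hbign : bigs.card * s ≤ n := by
      have h1 : bigs.card * s ≤ ∑ Y ∈ bigs, Y.card := by
        simpa [smul_eq_mul] using
          Finset.card_nsmul_le_sum bigs (fun Y => Y.card) s
            (fun Y hY => (Finset.mem_filter.1 hY).2)
      have h2 : ∑ Y ∈ bigs, Y.card ≤ ∑ Y ∈ P₁.parts, Y.card :=
        Finset.sum_le_sum_of_subset (Finset.filter_subset _ _)
      have h3 : ∑ Y ∈ P₁.parts, Y.card = n := by
        rw [P₁.sum_card_parts, Finset.card_univ, hcard]
      omega
    -- now the real inequality
    have hns : n < s * s := by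
      have h := Nat.lt_succ_sqrt n
      simpa [hs, Nat.succ_eq_add_one] using h
    have hlt : bigs.card < s := by
      by_contra hc
      push_neg at hc
      nlinarith
    have hsq : bigs.card ^ 2 < n := by
      rcases Nat.eq_zero_or_pos bigs.card with h0 | hpos
      · simp only [h0]; omega
      · nlinarith
    have h1 : (bigs.card : ℝ) < Real.sqrt n := by
      apply Real.lt_sqrt_of_sq_lt
      exact_mod_cast hsq
    have h2 : (Nat.sqrt n : ℝ) ≤ Real.sqrt n := Real.nat_sqrt_le_real_sqrt
    have h3 : (Q.parts.card : ℝ) ≤ (bigs.card : ℝ) + (Nat.sqrt n : ℝ) := by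
      exact_mod_cast hcount
    linarith
  · -- refinement property
    intro B hB
    obtain ⟨x₀, hx₀⟩ := Q.nonempty_of_mem_parts hB
    by_cases hbig : s ≤ (P₁.part x₀).card
    · -- B ⊆ P₁.part x₀, so P₂|B refines P₁|B
      right
      rintro Z hZ -
      refine ⟨P₁.part x₀, P₁.part_mem.2 (Finset.mem_univ x₀), ?_⟩
      intro w hw
      obtain ⟨hwZ, hwB⟩ := Finset.mem_inter.1 hw
      refine Finset.mem_inter.2 ⟨?_, hwB⟩
      have h := (hmem B hB x₀ hx₀ w).1 hwB
      simp only [hind] at h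
      rw [if_pos hbig] at h
      by_cases hw' : s ≤ (P₁.part w).card
      · rw [if_pos hw'] at h
        have heq : P₁.part x₀ = P₁.part w := Sum.inl.inj h
        rw [heq]; exact P₁.mem_part (Finset.mem_univ w)
      · rw [if_neg hw'] at h
        exact absurd h (by simp)
    · -- each part of P₁ meets B in at most one point, so P₁|B refines P₂|B
      left
      rintro Y hY ⟨x, hx⟩
      obtain ⟨hxY, hxB⟩ := Finset.mem_inter.1 hx
      refine ⟨P₂.part x, P₂.part_mem.2 (Finset.mem_univ x), ?_⟩
      intro y hy
      obtain ⟨hyY, hyB⟩ := Finset.mem_inter.1 hy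
      -- show y = x
      have hix : ind x₀ = ind x := (hmem B hB x₀ hx₀ x).1 hxB
      have hiy : ind x₀ = ind y := (hmem B hB x₀ hx₀ y).1 hyB
      have hixy : ind x = ind y := hix ▸ hiy
      have hpx : P₁.part x = Y := P₁.part_eq_of_mem hY hxY
      have hpy : P₁.part y = Y := P₁.part_eq_of_mem hY hyY
      have hix0 : ¬ s ≤ (P₁.part x).card := by
        by_contra hc
        have h := hix
        simp only [hind] at h
        rw [if_neg hbig, if_pos hc] at h
        exact absurd h (by simp)
      have hiy0 : ¬ s ≤ (P₁.part y).card := by rwa [hpy, ← hpx]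
      have h := hixy
      simp only [hind] at h
      rw [if_neg hix0, if_neg hiy0] at h
      have hr := Sum.inr.inj h
      rw [hpx, hpy] at hr
      have hxy : x = y := hrank Y x hxY y hyY hr
      rw [← hxy]
      exact Finset.mem_inter.2 ⟨P₂.mem_part (Finset.mem_univ x), hxB⟩
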